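/- arXiv:2011.11985 — 3 statements merged into one kernel-verified Lean document; each statement's English description precedes it below -/
import Mathlib

section
/- For all nonnegative reals a, b and all β with 0 < β ≤ 1, (a + b)^(3/2) ≤ sqrt(1 + β/2)·a^(3/2) + sqrt(1 + 2/β)·b^(3/2). -/
theorem stmt_3 (a b β : ℝ) (ha : 0 ≤ a) (hb : 0 ≤ b) (hβ : 0 < β) (hβ1 : β ≤ 1) :
    (a + b) ^ ((3 : ℝ) / 2) ≤
      Real.sqrt (1 + β / 2) * a ^ ((3 : ℝ) / 2) + Real.sqrt (1 + 2 / β) * b ^ ((3 : ℝ) / 2) := by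
  set c : ℝ := 1 + β / 2 with hcdef
  set d : ℝ := 1 + 2 / β with hddef
  have hc : (0:ℝ) < c := by positivity
  have hd : (0:ℝ) < d := by positivity
  have hsum : 1/c + 1/d = 1 := by
    field_simp [hcdef, hddef]
    rw [hcdef, hddef]
    have hX : 2/β*(β/2) = 1 := by
      rw [div_mul_div_comm, mul_comm 2 β]; exact div_self (by positivity)
    linear_combination -hX
  have hconv := (convexOn_rpow (p := (3:ℝ)/2) (by norm_num)).2
    (Set.mem_Ici.2 (by positivity : (0:ℝ) ≤ c * a))
    (Set.mem_Ici.2 (by positivity : (0:ℝ) ≤ d * b))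
    (le_of_lt (by positivity : (0:ℝ) < 1/c))
    (le_of_lt (by positivity : (0:ℝ) < 1/d)) hsum
  simp only [smul_eq_mul] at hconv
  have h1 : (1/c) * (c*a) + (1/d) * (d*b) = a + b := by
    field_simp
  rw [h1] at hconv
  have h2 : (c*a)^((3:ℝ)/2) = c^((3:ℝ)/2) * a^((3:ℝ)/2) := Real.mul_rpow hc.le ha
  have h3 : (d*b)^((3:ℝ)/2) = d^((3:ℝ)/2) * b^((3:ℝ)/2) := Real.mul_rpow hd.le hb
  have h4 : 1/c * c^((3:ℝ)/2) = Real.sqrt c := by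
    rw [Real.sqrt_eq_rpow, show (1:ℝ)/2 = 3/2 - 1 by norm_num, Real.rpow_sub hc,
      Real.rpow_one]
    ring
  have h5 : 1/d * d^((3:ℝ)/2) = Real.sqrt d := by
    rw [Real.sqrt_eq_rpow, show (1:ℝ)/2 = 3/2 - 1 by norm_num, Real.rpow_sub hd,
      Real.rpow_one]
    ring
  calc (a + b) ^ ((3:ℝ)/2) ≤ 1/c * (c*a)^((3:ℝ)/2) + 1/d * (d*b)^((3:ℝ)/2) := hconv
    _ = (1/c * c^((3:ℝ)/2)) * a^((3:ℝ)/2) + (1/d * d^((3:ℝ)/2)) * b^((3:ℝ)/2) := by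
        rw [h2, h3]; ring
    _ = Real.sqrt c * a^((3:ℝ)/2) + Real.sqrt d * b^((3:ℝ)/2) := by rw [h4, h5]
end

section
/- For all g, Δ ∈ ℝ^d, −⟨g + Δ, g⟩/‖g + Δ‖^(1/2) ≤ −‖g‖^(3/2)/3 + 8‖Δ‖^(3/2), where the left side is interpreted as 0 if g + Δ = 0 (in which case the right side is nonnegative since ‖g‖ = ‖Δ‖). -/
set_option maxHeartbeats 1000000 in


theorem stmt_13 (d : ℕ) (g Δ : EuclideanSpace ℝ (Fin d)) :
    -(inner ℝ (g + Δ) g : ℝ) / ‖g + Δ‖ ^ ((1 : ℝ) / 2) ≤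
      -‖g‖ ^ ((3 : ℝ) / 2) / 3 + 8 * ‖Δ‖ ^ ((3 : ℝ) / 2) := by
  have ha : (0:ℝ) ≤ ‖g‖ := norm_nonneg _
  have hb : (0:ℝ) ≤ ‖Δ‖ := norm_nonneg _
  have hn : (0:ℝ) ≤ ‖g + Δ‖ := norm_nonneg _
  set t : ℝ := inner ℝ (g + Δ) g with ht
  -- Cauchy-Schwarz
  have hcs : |t| ≤ ‖g + Δ‖ * ‖g‖ := abs_real_inner_le_norm _ _
  -- lower bound on t
  have hlow : ‖g‖ ^ 2 - ‖Δ‖ * ‖g‖ ≤ t := by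
    have h1 : t = ‖g‖ ^ 2 + inner ℝ Δ g := by
      rw [ht, inner_add_left, real_inner_self_eq_norm_sq]
    have h2 : -(‖Δ‖ * ‖g‖) ≤ (inner ℝ Δ g : ℝ) :=
      neg_le_of_abs_le (abs_real_inner_le_norm _ _)
    linarith
  -- triangle inequalities
  have htri1 : ‖g + Δ‖ ≤ ‖g‖ + ‖Δ‖ := norm_add_le _ _
  have htri2 : ‖g‖ ≤ ‖g + Δ‖ + ‖Δ‖ := by
    have := norm_sub_le (g + Δ) Δ
    simpa using this
  -- rpow to sqrt conversions
  have h12 : ‖g + Δ‖ ^ ((1:ℝ)/2) = Real.sqrt ‖g + Δ‖ := (Real.sqrt_eq_rpow _).symm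
  have h32 : ∀ x : ℝ, 0 ≤ x → x ^ ((3:ℝ)/2) = Real.sqrt x ^ 3 := by
    intro x hx
    rw [Real.sqrt_eq_rpow, ← Real.rpow_natCast (x ^ ((1:ℝ)/2)) 3, ← Real.rpow_mul hx]
    norm_num
  rw [h12, h32 _ ha, h32 _ hb]
  set sa := Real.sqrt ‖g‖ with hsa
  set sb := Real.sqrt ‖Δ‖ with hsb
  set sn := Real.sqrt ‖g + Δ‖ with hsn
  have hsa0 : 0 ≤ sa := Real.sqrt_nonneg _
  have hsb0 : 0 ≤ sb := Real.sqrt_nonneg _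
  have hsn0 : 0 ≤ sn := Real.sqrt_nonneg _
  have hsa2 : sa ^ 2 = ‖g‖ := Real.sq_sqrt ha
  have hsb2 : sb ^ 2 = ‖Δ‖ := Real.sq_sqrt hb
  have hsn2 : sn ^ 2 = ‖g + Δ‖ := Real.sq_sqrt hn
  have hcs' : |t| ≤ sn ^ 2 * sa ^ 2 := by rw [hsn2, hsa2]; exact hcs
  have hlow' : (sa ^ 2) ^ 2 - sb ^ 2 * sa ^ 2 ≤ t := by rw [hsa2, hsb2]; exact hlow
  have htri1' : sn ^ 2 ≤ sa ^ 2 + sb ^ 2 := by rw [hsn2, hsa2, hsb2]; exact htri1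
  have htri2' : sa ^ 2 ≤ sn ^ 2 + sb ^ 2 := by rw [hsn2, hsa2, hsb2]; exact htri2
  clear hcs hlow htri1 htri2
  rcases eq_or_lt_of_le hsn0 with h0 | hpos
  · -- sn = 0
    rw [← h0, div_zero]
    have hab : sa ≤ sb := by nlinarith
    nlinarith [pow_le_pow_left₀ hsa0 hab 3]
  · rw [div_le_iff₀ hpos]
    have habs1 : -t ≤ sn ^ 2 * sa ^ 2 := by
      have := neg_abs_le t; linarith [neg_abs_le t, hcs']
    by_cases hcase : sa ^ 2 ≥ 2 * sb ^ 2
    · -- ‖g‖ ≥ 2‖Δ‖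
      have hsnsa : sn ≤ (3/2) * sa := by nlinarith
      have hlt : -t ≤ sa ^ 2 * sb ^ 2 - sa ^ 4 := by nlinarith
      nlinarith [mul_nonneg (mul_nonneg hsb0 (mul_nonneg hsb0 hsb0)) hsn0,
        mul_nonneg (mul_nonneg hsa0 (mul_nonneg hsa0 hsa0)) (by linarith : 0 ≤ (3/2) * sa - sn)]
    · push_neg at hcase
      have hsnsb : sn ≤ 2 * sb := by nlinarith
      have hsasb : sa ≤ (3/2) * sb := by nlinarith
      -- need: -t ≤ (-sa^3/3 + 8 sb^3) * sn, using -t ≤ sn^2 sa^2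
      have key : sn * sa ^ 2 + sa ^ 3 / 3 ≤ 8 * sb ^ 3 := by
        nlinarith [mul_nonneg hsn0 hsa0, mul_nonneg hsb0 hsb0,
          mul_le_mul_of_nonneg_right hsnsb (mul_nonneg hsa0 hsa0),
          mul_le_mul_of_nonneg_right hsasb (mul_nonneg hsa0 hsa0),
          mul_le_mul_of_nonneg_left hcase.le hsb0]
      nlinarith [mul_le_mul_of_nonneg_left key hsn0]
end

section
/- Let F : ℝ^d → ℝ be differentiable with L-Lipschitz gradient, let w, z ∈ ℝ^d, η > 0 with ηL ≤ 1/4, and set w' = w − η·z. Then ‖∇F(w)‖^2 ≤ 4(F(w) − F(w'))/η + 3‖z − ∇F(w)‖^2. -/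
open scoped RealInnerProductSpace

/-- Descent lemma: if the gradient is `L`-Lipschitz, then
`F (w + v) ≤ F w + ⟪∇F w, v⟫ + L/2 * ‖v‖²`. -/
lemma descent_lemma {d : ℕ} (F : EuclideanSpace ℝ (Fin d) → ℝ) (L : ℝ)
    (hF : Differentiable ℝ F)
    (hL : ∀ x y, ‖gradient F x - gradient F y‖ ≤ L * ‖x - y‖)
    (w v : EuclideanSpace ℝ (Fin d)) :
    F (w + v) ≤ F w + ⟪gradient F w, v⟫ + L / 2 * ‖v‖ ^ 2 := by
  have hcont : Continuous fun x => gradient F x := by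
    refine LipschitzWith.continuous (K := Real.toNNReal L) ?_
    refine LipschitzWith.of_dist_le_mul fun x y => ?_
    calc dist (gradient F x) (gradient F y) ≤ L * dist x y := by
          simpa [dist_eq_norm] using hL x y
      _ ≤ Real.toNNReal L * dist x y :=
          mul_le_mul_of_nonneg_right (Real.le_coe_toNNReal L) dist_nonneg
  set φ : ℝ → ℝ := fun t => ⟪gradient F (w + t • v), v⟫ with hφ
  have hderiv : ∀ t ∈ Set.uIcc (0:ℝ) 1, HasDerivAt (fun t => F (w + t • v)) (φ t) t := by
    intro t _
    have h1 : HasDerivAt (fun t : ℝ => w + t • v) v t := by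
      simpa using ((hasDerivAt_id t).smul_const v).const_add w
    have h2 := (hF (w + t • v)).hasGradientAt
    rw [hasGradientAt_iff_hasFDerivAt] at h2
    have h3 := h2.comp_hasDerivAt t h1
    simp only [InnerProductSpace.toDual_apply_apply] at h3
    exact h3
  have hφcont : Continuous φ := by
    apply Continuous.inner
    · exact hcont.comp (continuous_const.add (continuous_id.smul continuous_const))
    · exact continuous_const
  have hint : IntervalIntegrable φ MeasureTheory.volume 0 1 :=
    hφcont.intervalIntegrable 0 1
  have heq : F (w + v) - F w = ∫ t in (0:ℝ)..1, φ t := by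
    have := intervalIntegral.integral_eq_sub_of_hasDerivAt hderiv hint
    simpa using this.symm
  have hbound : (∫ t in (0:ℝ)..1, φ t) ≤
      ∫ t in (0:ℝ)..1, (⟪gradient F w, v⟫ + L * t * ‖v‖ ^ 2) := by
    apply intervalIntegral.integral_mono_on zero_le_one hint
    · apply IntervalIntegrable.add intervalIntegrable_const
      exact (Continuous.intervalIntegrable (by fun_prop) 0 1)
    · intro t ht
      have ht0 : 0 ≤ t := ht.1
      have : φ t - ⟪gradient F w, v⟫ = ⟪gradient F (w + t • v) - gradient F w, v⟫ := by
        simp [hφ, inner_sub_left]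
      have hcs : ⟪gradient F (w + t • v) - gradient F w, v⟫ ≤
          ‖gradient F (w + t • v) - gradient F w‖ * ‖v‖ := real_inner_le_norm _ _
      have hlip := hL (w + t • v) w
      have hnorm : ‖(w + t • v) - w‖ = t * ‖v‖ := by
        simp [norm_smul, abs_of_nonneg ht0]
      rw [hnorm] at hlip
      have hvnonneg : (0:ℝ) ≤ ‖v‖ := norm_nonneg v
      nlinarith [hcs, hlip, this]
  have hintval : (∫ t in (0:ℝ)..1, (⟪gradient F w, v⟫ + L * t * ‖v‖ ^ 2)) =
      ⟪gradient F w, v⟫ + L / 2 * ‖v‖ ^ 2 := by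
    rw [intervalIntegral.integral_add intervalIntegrable_const
      (Continuous.intervalIntegrable (by fun_prop) 0 1)]
    have h2 : (∫ t in (0:ℝ)..1, L * t * ‖v‖ ^ 2) = L / 2 * ‖v‖ ^ 2 := by
      have : (fun t : ℝ => L * t * ‖v‖ ^ 2) = fun t : ℝ => (L * ‖v‖ ^ 2) * t := by
        funext t; ring
      rw [this, intervalIntegral.integral_const_mul, integral_id]
      ring
    rw [h2]
    simp
  linarith [heq, hbound, hintval.le, hintval.ge]

theorem stmt_14 (d : ℕ) (F : EuclideanSpace ℝ (Fin d) → ℝ) (L : ℝ)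
    (hF : Differentiable ℝ F)
    (hL : ∀ x y, ‖gradient F x - gradient F y‖ ≤ L * ‖x - y‖)
    (w z : EuclideanSpace ℝ (Fin d)) (η : ℝ) (hη : 0 < η) (hηL : η * L ≤ 1 / 4)
    (w' : EuclideanSpace ℝ (Fin d)) (hw' : w' = w - η • z) :
    ‖gradient F w‖ ^ 2 ≤ 4 * (F w - F w') / η + 3 * ‖z - gradient F w‖ ^ 2 := by
  have key := descent_lemma F L hF hL w (-(η • z))
  have hw'' : w' = w + -(η • z) := by rw [hw']; abel
  rw [← hw''] at key
  set g := gradient F w with hg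
  have hinner : ⟪g, -(η • z)⟫ = -(η * ⟪g, z⟫) := by
    rw [inner_neg_right, real_inner_smul_right]
  have hnorm : ‖-(η • z)‖ ^ 2 = η ^ 2 * ‖z‖ ^ 2 := by
    rw [norm_neg, norm_smul]
    simp [abs_of_pos hη, mul_pow]
  rw [hinner, hnorm] at key
  -- key : F w' ≤ F w - η * ⟪g, z⟫ + L / 2 * (η ^ 2 * ‖z‖ ^ 2)
  have hdesc : η * ⟪g, z⟫ - L / 2 * (η ^ 2 * ‖z‖ ^ 2) ≤ F w - F w' := by linarith
  have hcs : |⟪g, z - g⟫| ≤ ‖g‖ * ‖z - g‖ := abs_real_inner_le_norm _ _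
  have hexp : ‖z - g‖ ^ 2 = ‖z‖ ^ 2 - 2 * ⟪z, g⟫ + ‖g‖ ^ 2 := norm_sub_sq_real z g
  have hgz : ⟪g, z⟫ = ⟪z, g⟫ := real_inner_comm z g
  have hge : ⟪g, z - g⟫ = ⟪g, z⟫ - ‖g‖ ^ 2 := by
    rw [inner_sub_right, real_inner_self_eq_norm_sq]
  have habs := abs_le.mp hcs
  have hη' : 0 < η := hη
  rw [div_add' _ _ _ (ne_of_gt hη'), le_div_iff₀ hη']
  have hLη : η * L * ‖z‖ ^ 2 ≤ 1 / 4 * ‖z‖ ^ 2 :=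
    mul_le_mul_of_nonneg_right hηL (sq_nonneg _)
  nlinarith [hdesc, habs.1, habs.2, sq_nonneg (‖g‖ - ‖z - g‖), sq_nonneg (‖g‖ + ‖z - g‖), hη.le, sq_nonneg ‖z‖, mul_pos hη hη]
end
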